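/- (Key lemma in the proof of Proposition 4) Let U ≥ 2 be an integer and define f(x) := g'(x)(1−x) − (U−1)g(x) for x ∈ (0,1) and F(x) := U·g(x)·(1−x)^{U−1} for x ∈ [0,1]. Then: (i) f is strictly decreasing on (0,1), lim_{x→0+} f(x) = ∞, and f(1/U) < 0; (ii) there is a unique x* ∈ (0, 1/U) with f(x*) = 0; (iii) F is strictly increasing on (0, x*) and strictly decreasing on (x*, 1); consequently x* is the unique maximizer of F on [0,1], and x* is the unique solution in (0, 1/U) of g'(x)(1−x) = (U−1)g(x). -/

import Mathlib

open Set Filter Topology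

/-- Key lemma in the proof of Proposition 4: properties of
`f(x) = g'(x)(1−x) − (U−1)g(x)` and `F(x) = U g(x)(1−x)^{U−1}`. -/
theorem key_lemma_prop4
    (g g' : ℝ → ℝ)
    (hg_cont : ContinuousOn g (Icc 0 1))
    (hg_mono : StrictMonoOn g (Icc 0 1))
    (hg_conc : StrictConcaveOn ℝ (Icc 0 1) g)
    (hg_deriv : ∀ x ∈ Ioo (0:ℝ) 1, HasDerivAt g (g' x) x)
    (hg'_cont : ContinuousOn g' (Ioo 0 1))
    (hg0 : g 0 = 0)
    (hg'0 : Tendsto g' (𝓝[>] (0:ℝ)) atTop)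
    (hg'1 : Tendsto g' (𝓝[<] (1:ℝ)) (𝓝 0))
    (U : ℕ) (hU : 2 ≤ U)
    (f F : ℝ → ℝ)
    (hf : ∀ x, f x = g' x * (1 - x) - ((U : ℝ) - 1) * g x)
    (hF : ∀ x, F x = (U : ℝ) * g x * (1 - x) ^ (U - 1)) :
    StrictAntiOn f (Ioo 0 1) ∧
    Tendsto f (𝓝[>] (0:ℝ)) atTop ∧
    f (1 / (U : ℝ)) < 0 ∧
    ∃ xstar ∈ Ioo (0:ℝ) (1 / (U : ℝ)), f xstar = 0 ∧
      (∀ x ∈ Ioo (0:ℝ) (1 / (U : ℝ)), f x = 0 → x = xstar) ∧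
      StrictMonoOn F (Ioo 0 xstar) ∧
      StrictAntiOn F (Ioo xstar 1) ∧
      (∀ x ∈ Icc (0:ℝ) 1, x ≠ xstar → F x < F xstar) ∧
      (∀ x ∈ Ioo (0:ℝ) (1 / (U : ℝ)),
        g' x * (1 - x) = ((U : ℝ) - 1) * g x → x = xstar) := by
  have hc2 : (2:ℝ) ≤ (U:ℝ) := by exact_mod_cast hU
  have hcpos : (0:ℝ) < (U:ℝ) := by linarith
  have hc1 : (1:ℝ) ≤ (U:ℝ) - 1 := by linarith
  have hUinv : (0:ℝ) < 1 / (U:ℝ) := by positivity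
  have hUinv2 : (1:ℝ) / (U:ℝ) ≤ 1/2 := by
    rw [div_le_div_iff₀ hcpos (by norm_num)]; linarith
  -- g' is strictly antitone on (0,1)
  have hg'anti : ∀ x ∈ Ioo (0:ℝ) 1, ∀ y ∈ Ioo (0:ℝ) 1, x < y → g' y < g' x := by
    intro x hx y hy hxy
    have h1 := hg_conc.lt_slope_of_hasDerivAt (Ioo_subset_Icc_self hx)
      (Ioo_subset_Icc_self hy) hxy (hg_deriv y hy)
    have h2 := hg_conc.slope_lt_of_hasDerivAt (Ioo_subset_Icc_self hx)
      (Ioo_subset_Icc_self hy) hxy (hg_deriv x hx)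
    linarith
  -- g' is positive on (0,1)
  have hg'pos : ∀ x ∈ Ioo (0:ℝ) 1, 0 < g' x := by
    intro x hx
    have hm : (x+1)/2 ∈ Ioo (0:ℝ) 1 := ⟨by linarith [hx.1], by linarith [hx.2]⟩
    have h1 : g' ((x+1)/2) < g' x := hg'anti x hx _ hm (by linarith [hx.2])
    have h2 : (0:ℝ) ≤ g' ((x+1)/2) := by
      refine le_of_tendsto hg'1 ?_
      filter_upwards [Ioo_mem_nhdsLT_of_mem (⟨hm.2, le_refl (1:ℝ)⟩ : (1:ℝ) ∈ Ioc ((x+1)/2) 1)]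
        with y hy
      exact le_of_lt (hg'anti _ hm y ⟨lt_trans hm.1 hy.1, hy.2⟩ hy.1)
    linarith
  -- f is strictly antitone
  have hfanti : StrictAntiOn f (Ioo 0 1) := by
    intro x hx y hy hxy
    rw [hf, hf]
    have h1 : g' y * (1 - y) < g' x * (1 - x) :=
      mul_lt_mul'' (hg'anti x hx y hy hxy) (by linarith) (le_of_lt (hg'pos y hy))
        (by linarith [hy.2])
    have h2 : g x < g y := hg_mono (Ioo_subset_Icc_self hx) (Ioo_subset_Icc_self hy) hxy
    nlinarith
  -- f tends to ∞ at 0⁺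
  have hftop : Tendsto f (𝓝[>] (0:ℝ)) atTop := by
    have hg0' : Tendsto g (𝓝[>] (0:ℝ)) (𝓝 0) := by
      have h := (hg_cont.continuousWithinAt (⟨le_refl 0, by norm_num⟩ : (0:ℝ) ∈ Icc 0 1))
      have h2 : Tendsto g (𝓝[Ioo (0:ℝ) 1] 0) (𝓝 (g 0)) :=
        h.mono_left (nhdsWithin_mono _ Ioo_subset_Icc_self)
      rw [hg0] at h2
      rwa [nhdsWithin_Ioo_eq_nhdsGT (by norm_num : (0:ℝ) < 1)] at h2
    have h1 : Tendsto (fun x => g' x * (1 - x)) (𝓝[>] (0:ℝ)) atTop := by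
      have hhalf : Tendsto (fun x => g' x * (1/2)) (𝓝[>] (0:ℝ)) atTop :=
        hg'0.atTop_mul_const (by norm_num)
      refine tendsto_atTop_mono' _ ?_ hhalf
      filter_upwards [Ioo_mem_nhdsGT_of_mem
        (⟨le_refl (0:ℝ), by norm_num⟩ : (0:ℝ) ∈ Ico (0:ℝ) (1/2))] with x hx
      have hx1 : x ∈ Ioo (0:ℝ) 1 := ⟨hx.1, by linarith [hx.2]⟩
      have := hg'pos x hx1
      nlinarith [hx.2]
    have h2 : Tendsto (fun x => -(((U:ℝ) - 1) * g x)) (𝓝[>] (0:ℝ)) (𝓝 (-(((U:ℝ)-1) * 0))) :=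
      ((hg0'.const_mul _).neg)
    have h3 := h1.atTop_add h2
    refine h3.congr (fun x => ?_)
    rw [hf]; ring
  -- f(1/U) < 0
  have hxU : (1:ℝ)/(U:ℝ) ∈ Ioo (0:ℝ) 1 := ⟨hUinv, by linarith⟩
  have hkey : ∀ x ∈ Ioo (0:ℝ) 1, g' x * x < g x := by
    intro x hx
    have h := hg_conc.lt_slope_of_hasDerivAt (⟨le_refl 0, by norm_num⟩ : (0:ℝ) ∈ Icc 0 1)
      (Ioo_subset_Icc_self hx) hx.1 (hg_deriv x hx)
    rw [slope_def_field, hg0] at h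
    have hx0 : (0:ℝ) < x := hx.1
    rw [sub_zero, sub_zero, lt_div_iff₀ hx0] at h
    linarith
  have hfU : f (1/(U:ℝ)) < 0 := by
    have h := hkey _ hxU
    rw [hf]
    have he : g' (1/(U:ℝ)) * (1 - 1/(U:ℝ)) - ((U:ℝ) - 1) * g (1/(U:ℝ))
        = ((U:ℝ) - 1) * (g' (1/(U:ℝ)) * (1/(U:ℝ)) - g (1/(U:ℝ))) := by
      field_simp
    rw [he]
    have : g' (1/(U:ℝ)) * (1/(U:ℝ)) - g (1/(U:ℝ)) < 0 := by linarith
    nlinarith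
  -- continuity of f on (0,1)
  have hf_cont : ContinuousOn f (Ioo 0 1) := by
    have : ContinuousOn (fun x => g' x * (1 - x) - ((U:ℝ) - 1) * g x) (Ioo 0 1) :=
      (hg'_cont.mul (continuousOn_const.sub continuousOn_id)).sub
        (continuousOn_const.mul (hg_cont.mono Ioo_subset_Icc_self))
    exact this.congr (fun x _ => hf x)
  -- find a point a with f a > 0
  obtain ⟨a, hfa, ha⟩ : ∃ a, 0 < f a ∧ a ∈ Ioo (0:ℝ) (1/(U:ℝ)) := by
    have h1 : ∀ᶠ x in 𝓝[>] (0:ℝ), 0 < f x := hftop.eventually (eventually_gt_atTop 0)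
    have h2 : ∀ᶠ x in 𝓝[>] (0:ℝ), x ∈ Ioo (0:ℝ) (1/(U:ℝ)) :=
      Ioo_mem_nhdsGT_of_mem ⟨le_refl 0, hUinv⟩
    exact (h1.and h2).exists
  -- IVT to find xstar
  have haU : Icc a (1/(U:ℝ)) ⊆ Ioo (0:ℝ) 1 := fun x hx =>
    ⟨lt_of_lt_of_le ha.1 hx.1, lt_of_le_of_lt hx.2 (by linarith)⟩
  obtain ⟨xstar, hxsmem, hxs0⟩ : ∃ x ∈ Icc a (1/(U:ℝ)), f x = 0 := by
    have h := intermediate_value_Icc' (le_of_lt ha.2) (hf_cont.mono haU)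
    have h0 : (0:ℝ) ∈ Icc (f (1/(U:ℝ))) (f a) := ⟨le_of_lt hfU, le_of_lt hfa⟩
    obtain ⟨x, hx, hfx⟩ := h h0
    exact ⟨x, hx, hfx⟩
  have hxs : xstar ∈ Ioo (0:ℝ) (1/(U:ℝ)) := by
    refine ⟨lt_of_lt_of_le ha.1 hxsmem.1, lt_of_le_of_ne hxsmem.2 ?_⟩
    intro h; rw [h] at hxs0; rw [hxs0] at hfU; exact lt_irrefl 0 hfU
  have hxs01 : xstar ∈ Ioo (0:ℝ) 1 := ⟨hxs.1, by linarith [hxs.2]⟩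
  -- uniqueness of zero
  have huniq : ∀ x ∈ Ioo (0:ℝ) (1/(U:ℝ)), f x = 0 → x = xstar := by
    intro x hx hfx
    have hx01 : x ∈ Ioo (0:ℝ) 1 := ⟨hx.1, by linarith [hx.2]⟩
    rcases lt_trichotomy x xstar with h | h | h
    · have := hfanti hx01 hxs01 h; rw [hfx, hxs0] at this; exact absurd this (lt_irrefl 0)
    · exact h
    · have := hfanti hxs01 hx01 h; rw [hfx, hxs0] at this; exact absurd this (lt_irrefl 0)
  -- derivative of F
  have hF_deriv : ∀ x ∈ Ioo (0:ℝ) 1, HasDerivAt F ((U:ℝ) * (1-x)^(U-2) * f x) x := by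
    intro x hx
    have hpow : HasDerivAt (fun y : ℝ => (1 - y) ^ (U-1))
        (↑(U-1) * (1-x)^(U-1-1) * (-1)) x := by
      have h1 : HasDerivAt (fun y : ℝ => 1 - y) (-1) x := (hasDerivAt_id x).const_sub 1
      exact h1.pow (U-1)
    have h2 := ((hg_deriv x hx).mul hpow).const_mul (U:ℝ)
    have heq : (U:ℝ) * (g' x * (1-x)^(U-1) + g x * (↑(U-1) * (1-x)^(U-1-1) * (-1)))
        = (U:ℝ) * (1-x)^(U-2) * f x := by
      have hU1 : U - 1 = (U - 2) + 1 := by omega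
      have hU11 : U - 1 - 1 = U - 2 := by omega
      have hcast : ((U-1 : ℕ) : ℝ) = (U:ℝ) - 1 := by
        rw [Nat.cast_sub (by omega)]; norm_num
      rw [hf, hU11, hcast, hU1, pow_succ]
      ring
    rw [heq] at h2
    refine h2.congr_of_eventuallyEq ?_
    filter_upwards with y
    rw [hF, Pi.mul_apply]; ring
  -- continuity of F on [0,1]
  have hF_cont : ContinuousOn F (Icc 0 1) := by
    have : ContinuousOn (fun x => (U:ℝ) * g x * (1 - x) ^ (U-1)) (Icc 0 1) :=
      (continuousOn_const.mul hg_cont).mul ((continuousOn_const.sub continuousOn_id).pow _)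
    exact this.congr (fun x _ => hF x)
  -- F strictly increasing on [0, xstar]
  have hFmono : StrictMonoOn F (Icc 0 xstar) := by
    refine strictMonoOn_of_deriv_pos (convex_Icc _ _)
      (hF_cont.mono (Icc_subset_Icc (le_refl 0) (le_of_lt hxs01.2))) ?_
    intro x hx
    rw [interior_Icc] at hx
    have hx01 : x ∈ Ioo (0:ℝ) 1 := ⟨hx.1, lt_trans hx.2 hxs01.2⟩
    rw [(hF_deriv x hx01).deriv]
    have hfx : 0 < f x := by
      have := hfanti hx01 hxs01 hx.2
      rw [hxs0] at this; exact this
    have : (0:ℝ) < (1-x)^(U-2) := pow_pos (by linarith [hx01.2]) _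
    positivity
  -- F strictly decreasing on [xstar, 1]
  have hFanti : StrictAntiOn F (Icc xstar 1) := by
    refine strictAntiOn_of_deriv_neg (convex_Icc _ _)
      (hF_cont.mono (Icc_subset_Icc (le_of_lt hxs01.1) (le_refl 1))) ?_
    intro x hx
    rw [interior_Icc] at hx
    have hx01 : x ∈ Ioo (0:ℝ) 1 := ⟨lt_trans hxs01.1 hx.1, hx.2⟩
    rw [(hF_deriv x hx01).deriv]
    have hfx : f x < 0 := by
      have := hfanti hxs01 hx01 hx.1
      rw [hxs0] at this; exact this
    have h2 : (0:ℝ) < (1-x)^(U-2) := pow_pos (by linarith [hx01.2]) _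
    have h3 : (0:ℝ) < (U:ℝ) * (1-x)^(U-2) := by positivity
    exact mul_neg_of_pos_of_neg h3 hfx
  refine ⟨hfanti, hftop, hfU, xstar, hxs, hxs0, huniq,
    hFmono.mono (Ioo_subset_Icc_self.trans (Icc_subset_Icc (le_refl 0) (le_refl xstar))),
    hFanti.mono Ioo_subset_Icc_self, ?_, ?_⟩
  · intro x hx hne
    rcases lt_or_gt_of_ne hne with h | h
    · exact hFmono ⟨hx.1, le_of_lt h⟩ ⟨le_of_lt hxs01.1, le_refl _⟩ h
    · exact hFanti ⟨le_refl _, le_of_lt hxs01.2⟩ ⟨le_of_lt h, hx.2⟩ h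
  · intro x hx heq
    refine huniq x hx ?_
    rw [hf]; linarith [heq]
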